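/- Let 𝒜 be an abelian length category and [𝒰, 𝒯] a wide interval in tors 𝒜 with 𝒲 := 𝒰^⊥ ∩ 𝒯. Then the set of simple objects of the abelian category 𝒲 coincides with the set of brick labels of Hasse arrows of the interval [𝒰, 𝒯] starting at 𝒯, and also with the set of brick labels of Hasse arrows of [𝒰, 𝒯] ending at 𝒰. -/

import Mathlib

open CategoryTheory CategoryTheory.Limits

universe v u

attribute [local instance] CategoryTheory.Abelian.hasFiniteBiproducts

variable (C : Type u) [Category.{v} C] [Abelian C]

/-- The right Hom-perpendicular category of a class of objects. -/
def RPerp (X : Set C) : Set C := {Y | ∀ A ∈ X, ∀ f : A ⟶ Y, f = 0}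

/-- The left Hom-perpendicular category of a class of objects. -/
def LPerp (X : Set C) : Set C := {Y | ∀ A ∈ X, ∀ f : Y ⟶ A, f = 0}

/-- A torsion class: a class of objects containing the zero objects and closed under
quotients and extensions. -/
structure IsTorsionClass (T : Set C) : Prop where
  zero_mem : ∀ Z : C, IsZero Z → Z ∈ T
  quot_mem : ∀ ⦃A B : C⦄ (f : A ⟶ B), Epi f → A ∈ T → B ∈ T
  ext_mem : ∀ E : ShortComplex C, E.ShortExact → E.X₁ ∈ T → E.X₃ ∈ T → E.X₂ ∈ T

/-- A torsion-free class: a class of objects containing the zero objects and closed under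
subobjects and extensions. -/
structure IsTorsionFreeClass (F : Set C) : Prop where
  zero_mem : ∀ Z : C, IsZero Z → Z ∈ F
  sub_mem : ∀ ⦃A B : C⦄ (f : A ⟶ B), Mono f → B ∈ F → A ∈ F
  ext_mem : ∀ E : ShortComplex C, E.ShortExact → E.X₁ ∈ F → E.X₃ ∈ F → E.X₂ ∈ F

/-- The smallest torsion class containing a class of objects. -/
def torsClosure (X : Set C) : Set C := ⋂₀ {T | IsTorsionClass C T ∧ X ⊆ T}

/-- The smallest torsion-free class containing a class of objects. -/
def torfClosure (X : Set C) : Set C := ⋂₀ {F | IsTorsionFreeClass C F ∧ X ⊆ F}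

/-- `ExtStar U W` is the class of objects `X` admitting a short exact sequence
`0 → U' → X → W' → 0` with `U' ∈ U` and `W' ∈ W`. -/
def ExtStar (U W : Set C) : Set C :=
  {X | ∃ E : ShortComplex C, E.ShortExact ∧ E.X₁ ∈ U ∧ E.X₃ ∈ W ∧ Nonempty (E.X₂ ≅ X)}

/-- The additive closure of a class of objects: direct summands of finite direct sums. -/
def AddClosure (S : Set C) : Set C :=
  {X | ∃ (n : ℕ) (c : Fin n → C), (∀ i, c i ∈ S) ∧ ∃ f : (⨁ c) ⟶ X, IsSplitEpi f}

/-- Membership in the filtration closure `Filt S`: objects admitting a finite filtration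
with subquotients in `AddClosure S`. -/
inductive FiltMem (S : Set C) : C → Prop
  | of_isZero (X : C) : IsZero X → FiltMem S X
  | ext (E : ShortComplex C) : E.ShortExact → FiltMem S E.X₁ →
      E.X₃ ∈ AddClosure C S → FiltMem S E.X₂
  | of_iso (X Y : C) (e : X ≅ Y) : FiltMem S X → FiltMem S Y

/-- The filtration closure of a class of objects. -/
def Filt (S : Set C) : Set C := {X | FiltMem C S X}

/-- The class of quotients of objects of the additive closure of `S`. -/
def Fac (S : Set C) : Set C := {X | ∃ A ∈ AddClosure C S, ∃ f : A ⟶ X, Epi f}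

/-- The class of subobjects of objects of the additive closure of `S`. -/
def Subm (S : Set C) : Set C := {X | ∃ A ∈ AddClosure C S, ∃ f : X ⟶ A, Mono f}

/-- A wide subcategory: closed under kernels, cokernels and extensions
(and containing the zero objects). -/
structure IsWide (W : Set C) : Prop where
  zero_mem : ∀ Z : C, IsZero Z → Z ∈ W
  ker_mem : ∀ ⦃X Y : C⦄ (f : X ⟶ Y), X ∈ W → Y ∈ W → kernel f ∈ W
  coker_mem : ∀ ⦃X Y : C⦄ (f : X ⟶ Y), X ∈ W → Y ∈ W → cokernel f ∈ W
  ext_mem : ∀ E : ShortComplex C, E.ShortExact → E.X₁ ∈ W → E.X₃ ∈ W → E.X₂ ∈ W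

/-- A brick: a nonzero object all of whose nonzero endomorphisms are invertible
(equivalently, the endomorphism ring is a division ring). -/
def IsBrick (S : C) : Prop := ¬ IsZero S ∧ ∀ f : S ⟶ S, f = 0 ∨ IsIso f

/-- A simple object of the full abelian subcategory determined by a wide subcategory `W`. -/
def IsSimpleIn (W : Set C) (S : C) : Prop :=
  S ∈ W ∧ ¬ IsZero S ∧ ∀ ⦃A : C⦄ (f : A ⟶ S), A ∈ W → Mono f → IsZero A ∨ IsIso f

/-- A Hasse arrow `T → U` in the poset of torsion classes: `U ⊊ T` are adjacent. -/
def IsHasseArrow (T U : Set C) : Prop :=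
  IsTorsionClass C T ∧ IsTorsionClass C U ∧ U ⊂ T ∧
    ∀ V : Set C, IsTorsionClass C V → U ⊆ V → V ⊆ T → V = U ∨ V = T

/-- A Hasse arrow `F → G` in the poset of torsion-free classes: `G ⊊ F` are adjacent. -/
def IsHasseArrowTorf (F G : Set C) : Prop :=
  IsTorsionFreeClass C F ∧ IsTorsionFreeClass C G ∧ G ⊂ F ∧
    ∀ H : Set C, IsTorsionFreeClass C H → G ⊆ H → H ⊆ F → H = G ∨ H = F

/-- The brick label of a Hasse arrow `T → U` of torsion classes:
the unique brick in `U^⊥ ∩ T`. -/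
def IsBrickLabel (T U : Set C) (S : C) : Prop := IsBrick C S ∧ S ∈ RPerp C U ∩ T

/-- The brick label of a Hasse arrow `F → G` of torsion-free classes:
the unique brick in `^⊥G ∩ F`. -/
def IsBrickLabelTorf (F G : Set C) (S : C) : Prop := IsBrick C S ∧ S ∈ LPerp C G ∩ F

/-- The left wide subcategory of a torsion class. -/
def WL (T : Set C) : Set C :=
  {X | X ∈ T ∧ ∀ ⦃Y : C⦄ (g : Y ⟶ X), Y ∈ T → kernel g ∈ T}

/-- The right wide subcategory of a torsion-free class. -/
def WR (F : Set C) : Set C :=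
  {X | X ∈ F ∧ ∀ ⦃Y : C⦄ (f : X ⟶ Y), Y ∈ F → cokernel f ∈ F}

/-- A Serre subcategory of the abelian category given by a wide subcategory `W`:
closed under extensions, subobjects and quotients within `W`. -/
structure IsSerreIn (W S : Set C) : Prop where
  subset : S ⊆ W
  zero_mem : ∀ Z : C, IsZero Z → Z ∈ S
  sub_mem : ∀ ⦃A X : C⦄ (f : A ⟶ X), Mono f → A ∈ W → X ∈ S → A ∈ S
  quot_mem : ∀ ⦃X B : C⦄ (f : X ⟶ B), Epi f → B ∈ W → X ∈ S → B ∈ S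
  ext_mem : ∀ E : ShortComplex C, E.ShortExact → E.X₂ ∈ W →
    E.X₁ ∈ S → E.X₃ ∈ S → E.X₂ ∈ S

/-- A torsion class of the abelian category given by a wide subcategory `W`:
a subclass of `W` containing the zero objects and closed under quotients in `W`
and extensions. -/
structure IsTorsionClassIn (W X : Set C) : Prop where
  subset : X ⊆ W
  zero_mem : ∀ Z : C, IsZero Z → Z ∈ X
  quot_mem : ∀ ⦃A B : C⦄ (f : A ⟶ B), Epi f → A ∈ X → B ∈ W → B ∈ X
  ext_mem : ∀ E : ShortComplex C, E.ShortExact → E.X₁ ∈ X → E.X₃ ∈ X → E.X₂ ∈ X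
section AuxAll
variable {C}

section Aux

lemma aux_isZero_of_mono_eq_zero {A B : C} (f : A ⟶ B) [Mono f] (h : f = 0) : IsZero A := by
  rw [IsZero.iff_id_eq_zero]
  have h2 : (𝟙 A) ≫ f = (0 : A ⟶ A) ≫ f := by simp [h]
  exact (cancel_mono f).mp h2

lemma aux_isZero_of_epi_eq_zero {A B : C} (f : A ⟶ B) [Epi f] (h : f = 0) : IsZero B := by
  rw [IsZero.iff_id_eq_zero]
  have h2 : f ≫ (𝟙 B) = f ≫ (0 : B ⟶ B) := by simp [h]
  exact (cancel_epi f).mp h2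

lemma aux_epi_of_isZero_cokernel {A B : C} (f : A ⟶ B) (h : IsZero (cokernel f)) : Epi f := by
  refine Preadditive.epi_of_cancel_zero f (fun g hg => ?_)
  have := cokernel.π_desc f g hg
  rw [h.eq_of_tgt (cokernel.π f) 0, zero_comp] at this
  exact this.symm

lemma aux_mono_of_isZero_kernel {A B : C} (f : A ⟶ B) (h : IsZero (kernel f)) : Mono f := by
  refine Preadditive.mono_of_cancel_zero f (fun g hg => ?_)
  have := kernel.lift_ι f g hg
  rw [h.eq_of_src (kernel.ι f) 0, comp_zero] at this
  exact this.symm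

lemma aux_isZero_cokernel_of_epi {A B : C} (f : A ⟶ B) [Epi f] : IsZero (cokernel f) := by
  have h : f ≫ cokernel.π f = f ≫ 0 := by simp [cokernel.condition]
  exact aux_isZero_of_epi_eq_zero (cokernel.π f) ((cancel_epi f).mp h)

lemma aux_shortExact_mono {A B : C} (f : A ⟶ B) [Mono f] :
    (ShortComplex.mk f (cokernel.π f) (cokernel.condition f)).ShortExact :=
  ShortComplex.ShortExact.mk'
    (ShortComplex.exact_of_g_is_cokernel _ (cokernelIsCokernel f)) inferInstance inferInstance

lemma aux_shortExact_epi {A B : C} (g : A ⟶ B) [Epi g] :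
    (ShortComplex.mk (kernel.ι g) g (kernel.condition g)).ShortExact :=
  ShortComplex.ShortExact.mk'
    (ShortComplex.exact_of_f_is_kernel _ (kernelIsKernel g)) inferInstance inferInstance

lemma IsTorsionClass.mem_iso {T : Set C} (hT : IsTorsionClass C T) {A B : C} (e : A ≅ B)
    (hA : A ∈ T) : B ∈ T :=
  hT.quot_mem e.hom inferInstance hA

lemma aux_lperp_torsion (G : Set C) : IsTorsionClass C (LPerp C G) where
  zero_mem Z hZ := fun A _ f => hZ.eq_of_src f 0
  quot_mem A B f hf hA := fun Y hY g => by
    have h : f ≫ g = f ≫ 0 := by rw [comp_zero]; exact hA Y hY (f ≫ g)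
    exact (cancel_epi f).mp h
  ext_mem E hE h1 h3 := fun Y hY g => by
    have h0 : E.f ≫ g = 0 := h1 Y hY _
    obtain ⟨d, hd⟩ := CokernelCofork.IsColimit.desc' hE.gIsCokernel g h0
    rw [← hd, h3 Y hY d, comp_zero]

lemma aux_inter_torsion {T₁ T₂ : Set C} (h1 : IsTorsionClass C T₁) (h2 : IsTorsionClass C T₂) :
    IsTorsionClass C (T₁ ∩ T₂) where
  zero_mem Z hZ := ⟨h1.zero_mem Z hZ, h2.zero_mem Z hZ⟩
  quot_mem A B f hf hA := ⟨h1.quot_mem f hf hA.1, h2.quot_mem f hf hA.2⟩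
  ext_mem E hE hx hz := ⟨h1.ext_mem E hE hx.1 hz.1, h2.ext_mem E hE hx.2 hz.2⟩

lemma aux_rperp_mono {X : Set C} {A B : C} (hB : B ∈ RPerp C X) (f : A ⟶ B) [Mono f] :
    A ∈ RPerp C X := fun Y hY g => zero_of_comp_mono f (hB Y hY (g ≫ f))

lemma aux_rperp_iso {X : Set C} {A B : C} (e : A ≅ B) (hA : A ∈ RPerp C X) : B ∈ RPerp C X :=
  fun Y hY g => by
    have : (g ≫ e.inv) ≫ e.hom = g := by simp
    rw [← this, hA Y hY (g ≫ e.inv), zero_comp]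

lemma aux_W_iso {U T : Set C} (hT : IsTorsionClass C T) {A B : C} (e : A ≅ B)
    (hA : A ∈ RPerp C U ∩ T) : B ∈ RPerp C U ∩ T :=
  ⟨aux_rperp_iso e hA.1, hT.mem_iso e hA.2⟩

end Aux


section Aux2

lemma aux_pullback_shortExact {M N I : C} (π : M ⟶ N) [Epi π] (m : I ⟶ N) [Mono m] :
    (ShortComplex.mk
      (pullback.lift (kernel.ι π) 0 (by simp) : kernel π ⟶ pullback π m)
      (pullback.snd π m) (pullback.lift_snd _ _ _)).ShortExact := by
  set ℓ : kernel π ⟶ pullback π m := pullback.lift (kernel.ι π) 0 (by simp) with hℓ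
  have hfst : ℓ ≫ pullback.fst π m = kernel.ι π := pullback.lift_fst _ _ _
  have hsnd : ℓ ≫ pullback.snd π m = 0 := pullback.lift_snd _ _ _
  have hmono : Mono ℓ := by
    have : Mono (ℓ ≫ pullback.fst π m) := by rw [hfst]; infer_instance
    exact mono_of_mono ℓ (pullback.fst π m)
  have hlim : IsLimit (KernelFork.ofι ℓ hsnd) := by
    refine KernelFork.IsLimit.ofι' ℓ hsnd (fun {A} k hk => ?_)
    have hcond : (k ≫ pullback.fst π m) ≫ π = 0 := by
      rw [Category.assoc, pullback.condition, ← Category.assoc, hk, zero_comp]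
    refine ⟨kernel.lift π (k ≫ pullback.fst π m) hcond, ?_⟩
    apply pullback.hom_ext
    · rw [Category.assoc, hfst, kernel.lift_ι]
    · rw [Category.assoc, hsnd, comp_zero, hk]
  exact ShortComplex.ShortExact.mk' (ShortComplex.exact_of_f_is_kernel _ hlim)
    hmono inferInstance

lemma aux_bot_isZero (M : C) : IsZero ((⊥ : Subobject M) : C) :=
  aux_isZero_of_mono_eq_zero ((⊥ : Subobject M).arrow) (Subobject.bot_arrow)

lemma aux_radical {T : Set C} (hT : IsTorsionClass C T) (M : C) [IsNoetherianObject M] :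
    ∃ t : Subobject M, ((t : C) ∈ T ∧ ∀ Y ∈ T, ∀ h : Y ⟶ cokernel t.arrow, h = 0) := by
  obtain ⟨t, htm, hmax⟩ := (wellFounded_gt (α := Subobject M)).has_min
      {s : Subobject M | (s : C) ∈ T} ⟨⊥, hT.zero_mem _ (aux_bot_isZero M)⟩
  refine ⟨t, htm, fun Y hY h => ?_⟩
  by_contra hne
  set π : M ⟶ cokernel t.arrow := cokernel.π t.arrow with hπ
  set m : Abelian.image h ⟶ cokernel t.arrow := Abelian.image.ι h with hm
  have hI : Abelian.image h ∈ T := hT.quot_mem (Abelian.factorThruImage h) inferInstance hY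
  have hInz : ¬ IsZero (Abelian.image h) := fun hz => hne (by
    rw [← Abelian.image.fac h, hz.eq_of_src (Abelian.image.ι h) 0, comp_zero])
  -- kernel π ∈ T via iso with t
  have hkt : ((t : C)) ≅ kernel π := by
    have h1 : Mono (Abelian.factorThruImage t.arrow) := inferInstance
    have h2 : Epi (Abelian.factorThruImage t.arrow) := inferInstance
    exact asIso (Abelian.factorThruImage t.arrow)
  have hker : kernel π ∈ T := hT.mem_iso hkt htm
  have hP : pullback π m ∈ T := hT.ext_mem _ (aux_pullback_shortExact π m) hker hI
  set s : Subobject M := Subobject.mk (pullback.fst π m) with hs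
  have hsT : (s : C) ∈ T := hT.mem_iso (Subobject.underlyingIso (pullback.fst π m)).symm hP
  have hts : t ≤ s := by
    refine Subobject.le_mk_of_comm (pullback.lift t.arrow 0 (by simp [hπ, cokernel.condition])) ?_
    exact pullback.lift_fst _ _ _
  have hst : ¬ s ≤ t := by
    intro hle
    have harr : Subobject.ofLE s t hle ≫ t.arrow = s.arrow := Subobject.ofLE_arrow hle
    have h1 : s.arrow ≫ π = 0 := by
      rw [← harr, Category.assoc, cokernel.condition, comp_zero]
    have h2 : pullback.fst π m ≫ π = 0 := by
      rw [← Subobject.underlyingIso_arrow (pullback.fst π m), Category.assoc, h1, comp_zero]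
    have h3 : pullback.snd π m ≫ m = 0 := by rw [← pullback.condition, h2]
    have h4 : pullback.snd π m = 0 := zero_of_comp_mono m h3
    exact hInz (aux_isZero_of_epi_eq_zero (pullback.snd π m) h4)
  have hlt : t < s := lt_of_le_of_ne hts (fun e => hst (e ▸ le_refl t))
  exact hmax s hsT hlt

end Aux2

section Aux3

open CategoryTheory.Abelian Pseudoelement in
open CategoryTheory.Abelian.Pseudoelement in
lemma aux_pullback_cokernel_iso {N Q A : C} (q : N ⟶ Q) [Epi q] (f : A ⟶ Q) [Mono f] :
    Nonempty (cokernel (pullback.fst q f) ≅ cokernel f) := by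
  have hcond : pullback.fst q f ≫ q ≫ cokernel.π f = 0 := by
    rw [← Category.assoc, pullback.condition, Category.assoc, cokernel.condition, comp_zero]
  set u : cokernel (pullback.fst q f) ⟶ cokernel f :=
    cokernel.desc (pullback.fst q f) (q ≫ cokernel.π f) hcond with hu
  have hfac : cokernel.π (pullback.fst q f) ≫ u = q ≫ cokernel.π f := cokernel.π_desc _ _ _
  have hepi : Epi u := by
    have : Epi (cokernel.π (pullback.fst q f) ≫ u) := by rw [hfac]; exact epi_comp _ _
    exact epi_of_epi (cokernel.π (pullback.fst q f)) u
  have hmono : Mono u := by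
    apply mono_of_zero_of_map_zero
    intro x hx
    obtain ⟨n, hn⟩ := pseudo_surjective_of_epi (cokernel.π (pullback.fst q f)) x
    have h1 : (pseudoApply (cokernel.π f)) (pseudoApply q n) = 0 := by
      have h2 : pseudoApply (q ≫ cokernel.π f) n = 0 := by
        rw [← hfac, Pseudoelement.comp_apply, hn, hx]
      rwa [Pseudoelement.comp_apply] at h2
    obtain ⟨a, ha⟩ := pseudo_exact_of_exact (S := ShortComplex.mk f (cokernel.π f)
      (cokernel.condition f)) (aux_shortExact_mono f).exact _ h1
    obtain ⟨s, hs1, _⟩ := pseudo_pullback (p := n) (q := a) (f := q) (g := f) ha.symm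
    rw [← hn, ← hs1, ← Pseudoelement.comp_apply, cokernel.condition, Pseudoelement.zero_apply]
  exact ⟨@asIso _ _ _ _ u (isIso_of_mono_of_epi u)⟩

lemma aux_simple_quotient {U T : Set C} (hT : IsTorsionClass C T)
    (hwide : IsWide C (RPerp C U ∩ T)) {N : C} [IsNoetherianObject N]
    (hN : N ∈ RPerp C U ∩ T) (hNz : ¬ IsZero N) :
    ∃ (Q : C) (q' : N ⟶ Q), Epi q' ∧ IsSimpleIn C (RPerp C U ∩ T) Q := by
  have memW_iso : ∀ {A B : C} (e : A ≅ B), A ∈ RPerp C U ∩ T → B ∈ RPerp C U ∩ T :=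
    fun e hA => aux_W_iso hT e hA
  have hbot : (⊥ : Subobject N) ∈
      {K : Subobject N | K ≠ ⊤ ∧ cokernel K.arrow ∈ RPerp C U ∩ T} := by
    constructor
    · haveI := Subobject.nontrivial_of_not_isZero hNz
      exact bot_ne_top
    · refine memW_iso ?_ hN
      exact ((cokernelIsoOfEq (Subobject.bot_arrow)).trans cokernelZeroIsoTarget).symm
  obtain ⟨K, hK, hmax⟩ := (wellFounded_gt (α := Subobject N)).has_min
      {K : Subobject N | K ≠ ⊤ ∧ cokernel K.arrow ∈ RPerp C U ∩ T} ⟨⊥, hbot⟩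
  set q' : N ⟶ cokernel K.arrow := cokernel.π K.arrow with hq'
  have hQW : cokernel K.arrow ∈ RPerp C U ∩ T := hK.2
  have hQz : ¬ IsZero (cokernel K.arrow) := by
    intro hz
    have : Epi K.arrow := aux_epi_of_isZero_cokernel _ hz
    have : IsIso K.arrow := isIso_of_mono_of_epi _
    exact hK.1 ((Subobject.isIso_arrow_iff_eq_top K).mp this)
  refine ⟨cokernel K.arrow, q', inferInstance, hQW, hQz, ?_⟩
  intro A f hAW hf
  by_cases hA0 : IsZero A
  · exact Or.inl hA0
  right
  by_cases hQ'0 : IsZero (cokernel f)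
  · have : Epi f := aux_epi_of_isZero_cokernel f hQ'0
    exact isIso_of_mono_of_epi f
  exfalso
  set K' : Subobject N := Subobject.mk (pullback.fst q' f) with hK'
  have hKle : K ≤ K' := by
    refine Subobject.le_mk_of_comm (pullback.lift K.arrow 0 (by simp [hq'])) ?_
    exact pullback.lift_fst _ _ _
  have hKne : K ≠ K' := by
    intro he
    have hle : K' ≤ K := he ▸ le_refl K
    have harr : Subobject.ofLE K' K hle ≫ K.arrow = K'.arrow := Subobject.ofLE_arrow hle
    have h1 : K'.arrow ≫ q' = 0 := by
      rw [← harr, Category.assoc, cokernel.condition, comp_zero]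
    have h2 : pullback.fst q' f ≫ q' = 0 := by
      rw [← Subobject.underlyingIso_arrow (pullback.fst q' f), Category.assoc, h1, comp_zero]
    have h3 : pullback.snd q' f ≫ f = 0 := by rw [← pullback.condition, h2]
    exact hA0 (aux_isZero_of_epi_eq_zero (pullback.snd q' f) (zero_of_comp_mono f h3))
  obtain ⟨ecomp⟩ := aux_pullback_cokernel_iso q' f
  have hK'top : K' ≠ ⊤ := by
    intro he
    have : IsIso (pullback.fst q' f) := (Subobject.isIso_iff_mk_eq_top _).mpr he
    have hz : IsZero (cokernel (pullback.fst q' f)) := aux_isZero_cokernel_of_epi _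
    exact hQ'0 (hz.of_iso ecomp.symm)
  have hK'W : cokernel K'.arrow ∈ RPerp C U ∩ T := by
    have e1 : cokernel K'.arrow ≅ cokernel (pullback.fst q' f) :=
      (cokernelEpiComp (Subobject.underlyingIso (pullback.fst q' f)).inv K'.arrow).symm.trans
        (cokernelIsoOfEq (Subobject.underlyingIso_arrow (pullback.fst q' f)))
    exact memW_iso (e1.trans ecomp).symm (hwide.coker_mem f hAW hQW)
  exact hmax K' ⟨hK'top, hK'W⟩ (lt_of_le_of_ne hKle hKne)

end Aux3


section Aux4

lemma aux_brick {W : Set C} (hwide : IsWide C W) {S : C} (hS : IsSimpleIn C W S) :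
    IsBrick C S := by
  refine ⟨hS.2.1, fun f => ?_⟩
  have hk := hwide.ker_mem f hS.1 hS.1
  rcases hS.2.2 (kernel.ι f) hk inferInstance with h0 | hiso
  · haveI : Mono f := aux_mono_of_isZero_kernel f h0
    rcases hS.2.2 f hS.1 inferInstance with h | h
    · exact absurd h hS.2.1
    · exact Or.inr h
  · left
    haveI := hiso
    have h : kernel.ι f ≫ f = kernel.ι f ≫ 0 := by
      rw [kernel.condition, comp_zero]
    exact (cancel_epi (kernel.ι f)).mp h

lemma aux_epi_onto_S {U T : Set C} (hT : IsTorsionClass C T) {S : C}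
    (hS : IsSimpleIn C (RPerp C U ∩ T) S) {M : C} (hM : M ∈ T) (g : M ⟶ S) (hg : g ≠ 0) :
    Epi g := by
  have hIm : Abelian.image g ∈ RPerp C U ∩ T :=
    ⟨aux_rperp_mono hS.1.1 (Abelian.image.ι g),
      hT.quot_mem (Abelian.factorThruImage g) inferInstance hM⟩
  have hImz : ¬ IsZero (Abelian.image g) := fun hz => hg (by
    rw [← Abelian.image.fac g, hz.eq_of_src (Abelian.image.ι g) 0, comp_zero])
  rcases hS.2.2 (Abelian.image.ι g) hIm inferInstance with h | h
  · exact absurd h hImz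
  · haveI := h
    have : Epi (Abelian.factorThruImage g ≫ Abelian.image.ι g) := epi_comp _ _
    rwa [Abelian.image.fac g] at this

lemma aux_filt {U T : Set C} (hT : IsTorsionClass C T) (hwide : IsWide C (RPerp C U ∩ T))
    {S : C} (hS : IsSimpleIn C (RPerp C U ∩ T) S)
    {X : Set C} (hX : IsTorsionClass C X) (hSX : S ∈ X)
    (hV₁X : ∀ M : C, M ∈ T → (∀ g : M ⟶ S, g = 0) → M ∈ X)
    (M₀ : C) [IsArtinianObject M₀] :
    ∀ N : Subobject M₀, (N : C) ∈ RPerp C U ∩ T → (N : C) ∈ X := by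
  intro N
  induction N using WellFounded.induction (wellFounded_lt (α := Subobject M₀)) with
  | _ N IH =>
  intro hNW
  by_cases hall : ∀ g : (N : C) ⟶ S, g = 0
  · exact hV₁X _ hNW.2 hall
  push_neg at hall
  obtain ⟨g, hgne⟩ := hall
  haveI hepi : Epi g := aux_epi_onto_S hT hS hNW.2 g hgne
  have hKW : kernel g ∈ RPerp C U ∩ T := hwide.ker_mem g hNW hS.1
  set K' : Subobject M₀ := Subobject.mk (kernel.ι g ≫ N.arrow) with hK'
  have hK'le : K' ≤ N := by
    rw [← Subobject.mk_arrow N]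
    exact Subobject.mk_le_mk_of_comm (kernel.ι g) rfl
  have hne : ¬ N ≤ K' := by
    intro hle
    have harr : Subobject.ofLE N K' hle ≫ K'.arrow = N.arrow := Subobject.ofLE_arrow hle
    have harr2 : (Subobject.underlyingIso _).inv ≫ K'.arrow = kernel.ι g ≫ N.arrow :=
      Subobject.underlyingIso_arrow (kernel.ι g ≫ N.arrow)
    have harr3 : (Subobject.underlyingIso (kernel.ι g ≫ N.arrow)).hom ≫ kernel.ι g ≫ N.arrow
        = K'.arrow := ((Iso.inv_comp_eq _).mp harr2).symm
    have h1 : ((Subobject.ofLE N K' hle ≫ (Subobject.underlyingIso _).hom) ≫ kernel.ι g)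
        ≫ N.arrow = 𝟙 _ ≫ N.arrow := by
      simp only [Category.assoc, Category.id_comp]
      rw [harr3]
      exact harr
    have h2 := (cancel_mono N.arrow).mp h1
    have : Epi (kernel.ι g) := by
      have : Epi ((Subobject.ofLE N K' hle ≫ (Subobject.underlyingIso _).hom) ≫ kernel.ι g) := by
        rw [h2]; infer_instance
      exact epi_of_epi (Subobject.ofLE N K' hle ≫ (Subobject.underlyingIso (kernel.ι g ≫ N.arrow)).hom) (kernel.ι g)
    have h3 : g = 0 := by
      have : kernel.ι g ≫ g = kernel.ι g ≫ 0 := by rw [kernel.condition, comp_zero]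
      exact (cancel_epi (kernel.ι g)).mp this
    exact hgne h3
  have hlt : K' < N := lt_iff_le_not_ge.mpr ⟨hK'le, hne⟩
  have hK'W : (K' : C) ∈ RPerp C U ∩ T :=
    aux_W_iso hT (Subobject.underlyingIso (kernel.ι g ≫ N.arrow)).symm hKW
  have hK'X : (K' : C) ∈ X := IH K' hlt hK'W
  have hKX : kernel g ∈ X :=
    hX.mem_iso (Subobject.underlyingIso (kernel.ι g ≫ N.arrow)) hK'X
  exact hX.ext_mem _ (aux_shortExact_epi g) hKX hSX

end Aux4

end AuxAll

/-- For a wide interval `[U,T]` with `W = U^⊥ ∩ T`, the simple objects of `W` are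
exactly the labels of Hasse arrows of `[U,T]` starting at `T`, and also exactly the
labels of Hasse arrows of `[U,T]` ending at `U`. -/
theorem stmt_11 [Noetherian C] [Artinian C]
    (U T : Set C) (hU : IsTorsionClass C U) (hT : IsTorsionClass C T) (hUT : U ⊆ T)
    (W : Set C) (hW : W = RPerp C U ∩ T) (hwide : IsWide C W) :
    ∀ S : C,
      (IsSimpleIn C W S ↔
        ∃ V : Set C, U ⊆ V ∧ V ⊆ T ∧ IsHasseArrow C T V ∧ IsBrickLabel C T V S) ∧
      (IsSimpleIn C W S ↔
        ∃ V : Set C, U ⊆ V ∧ V ⊆ T ∧ IsHasseArrow C V U ∧ IsBrickLabel C V U S) := by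
  subst hW
  intro S
  refine ⟨⟨?_, ?_⟩, ⟨?_, ?_⟩⟩
  · -- forward 1
    intro hS
    have hSW := hS.1
    set V₁ : Set C := T ∩ LPerp C {S} with hV₁def
    have tcV₁ : IsTorsionClass C V₁ := aux_inter_torsion hT (aux_lperp_torsion {S})
    have hUV₁ : U ⊆ V₁ := fun A hA => ⟨hUT hA, fun B hB g => by
      rcases hB with rfl
      exact hSW.1 A hA g⟩
    have hSnV₁ : S ∉ V₁ := fun hSV => hS.2.1 (by
      rw [IsZero.iff_id_eq_zero]; exact hSV.2 S rfl (𝟙 S))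
    refine ⟨V₁, hUV₁, Set.inter_subset_left, ⟨hT, tcV₁, ?_, ?_⟩,
      ⟨aux_brick hwide hS, fun A hA f => hA.2 S rfl f, hSW.2⟩⟩
    · rw [Set.ssubset_def]
      exact ⟨Set.inter_subset_left, fun hsub => hSnV₁ (hsub hSW.2)⟩
    · intro X hX hVX hXT
      by_cases hXV : X ⊆ V₁
      · exact Or.inl (Set.Subset.antisymm hXV hVX)
      right
      obtain ⟨M, hMX, hMnV⟩ := Set.not_subset.mp hXV
      have hMT : M ∈ T := hXT hMX
      have hgex : ¬ ∀ g : M ⟶ S, g = 0 := fun hall =>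
        hMnV ⟨hMT, fun B hB g => by rcases hB with rfl; exact hall g⟩
      push_neg at hgex
      obtain ⟨g, hgne⟩ := hgex
      haveI := aux_epi_onto_S hT hS hMT g hgne
      have hSX : S ∈ X := hX.quot_mem g ‹Epi g› hMX
      refine Set.Subset.antisymm hXT (fun M' hM'T => ?_)
      obtain ⟨t, htV, hperp⟩ := aux_radical tcV₁ M'
      have hM₀W : cokernel t.arrow ∈ RPerp C U ∩ T :=
        ⟨fun A hA f => hperp A (hUV₁ hA) f,
          hT.quot_mem (cokernel.π t.arrow) inferInstance hM'T⟩
      have htop : ((⊤ : Subobject (cokernel t.arrow)) : C) ∈ X := by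
        apply aux_filt hT hwide hS hX hSX (fun M'' h1 h2 => hVX ⟨h1, fun B hB g' => by
          rcases hB with rfl; exact h2 g'⟩) (cokernel t.arrow) ⊤
        exact aux_W_iso hT (asIso ((⊤ : Subobject (cokernel t.arrow)).arrow)).symm hM₀W
      have hM₀X : cokernel t.arrow ∈ X :=
        hX.mem_iso (asIso ((⊤ : Subobject (cokernel t.arrow)).arrow)) htop
      exact hX.ext_mem _ (aux_shortExact_mono t.arrow) (hVX htV) hM₀X
  · -- converse 1
    rintro ⟨V, hUV, hVT, hHA, hBL⟩
    obtain ⟨⟨hSnz, hbrick⟩, hSRV, hST⟩ := hBL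
    have hSW : S ∈ RPerp C U ∩ T := ⟨fun A hA f => hSRV A (hUV hA) f, hST⟩
    refine ⟨hSW, hSnz, ?_⟩
    intro A f hAW hf
    by_cases hA0 : IsZero A
    · exact Or.inl hA0
    right
    set X : Set C := T ∩ LPerp C {A} with hXdef
    have hXtc : IsTorsionClass C X := aux_inter_torsion hT (aux_lperp_torsion {A})
    have hVX : V ⊆ X := fun M hM => ⟨hVT hM, fun B hB h => by
      rcases hB with rfl
      exact zero_of_comp_mono f (hSRV M hM (h ≫ f))⟩
    rcases hHA.2.2.2 X hXtc hVX Set.inter_subset_left with hXV | hXT2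
    · have hSnX : S ∉ X := fun hSX => hSnz (by
        rw [IsZero.iff_id_eq_zero]
        refine hSRV S ?_ (𝟙 S)
        rw [← hXV]; exact hSX)
      have hex : ¬ ∀ h : S ⟶ A, h = 0 := fun hall => hSnX ⟨hST, fun B hB h => by
        rcases hB with rfl; exact hall h⟩
      push_neg at hex
      obtain ⟨h, hne⟩ := hex
      have hne2 : h ≫ f ≠ 0 := fun h0 => hne (zero_of_comp_mono f h0)
      rcases hbrick (h ≫ f) with h0 | hiso
      · exact absurd h0 hne2
      · haveI := hiso
        haveI : Epi f := epi_of_epi h f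
        exact isIso_of_mono_of_epi f
    · exfalso
      have hAX : A ∈ X := by rw [hXT2]; exact hAW.2
      exact hA0 (by rw [IsZero.iff_id_eq_zero]; exact hAX.2 A rfl (𝟙 A))
  · -- forward 2
    intro hS
    have hSW := hS.1
    set G : Set C := RPerp C (U ∪ {S}) with hGdef
    set V₂ : Set C := LPerp C G with hV₂def
    have tcV₂ : IsTorsionClass C V₂ := aux_lperp_torsion G
    have hUV₂ : U ⊆ V₂ := fun A hA Y hY f => hY A (Or.inl hA) f
    have hSV₂ : S ∈ V₂ := fun Y hY f => hY S (Or.inr rfl) f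
    have hV₂T : V₂ ⊆ T := by
      intro M hM
      obtain ⟨t, htT, hperp⟩ := aux_radical hT M
      have hG : cokernel t.arrow ∈ G := by
        rintro B (hBU | rfl)
        · exact fun g => hperp B (hUT hBU) g
        · exact fun g => hperp B hSW.2 g
      have hz : IsZero (cokernel t.arrow) :=
        aux_isZero_of_epi_eq_zero _ (hM _ hG (cokernel.π t.arrow))
      exact hT.ext_mem _ (aux_shortExact_mono t.arrow) htT (hT.zero_mem _ hz)
    have hSnU : S ∉ U := fun hSU => hS.2.1 (by
      rw [IsZero.iff_id_eq_zero]; exact hSW.1 S hSU (𝟙 S))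
    refine ⟨V₂, hUV₂, hV₂T, ⟨tcV₂, hU, ?_, ?_⟩, aux_brick hwide hS, hSW.1, hSV₂⟩
    · rw [Set.ssubset_def]
      exact ⟨hUV₂, fun hsub => hSnU (hsub hSV₂)⟩
    · intro X hX hUX hXV₂
      by_cases hXU : X ⊆ U
      · exact Or.inl (Set.Subset.antisymm hXU hUX)
      right
      obtain ⟨M, hMX, hMnU⟩ := Set.not_subset.mp hXU
      obtain ⟨t, htU, hperp⟩ := aux_radical hU M
      have hN'z : ¬ IsZero (cokernel t.arrow) := fun hz =>
        hMnU (hU.ext_mem _ (aux_shortExact_mono t.arrow) htU (hU.zero_mem _ hz))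
      have hN'X : cokernel t.arrow ∈ X :=
        hX.quot_mem (cokernel.π t.arrow) inferInstance hMX
      have hMT : M ∈ T := hV₂T (hXV₂ hMX)
      have hN'W : cokernel t.arrow ∈ RPerp C U ∩ T :=
        ⟨fun A hA f => hperp A hA f, hT.quot_mem (cokernel.π t.arrow) inferInstance hMT⟩
      obtain ⟨Q, qm, hq, hQsimple⟩ := aux_simple_quotient hT hwide hN'W hN'z
      haveI := hq
      have hQX : Q ∈ X := hX.quot_mem qm hq hN'X
      have hSX : S ∈ X := by
        by_cases hall : ∀ g : S ⟶ Q, g = 0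
        · exfalso
          have hQG : Q ∈ G := by
            rintro B (hBU | rfl)
            · exact fun g => hQsimple.1.1 B hBU g
            · exact hall
          have hid := hXV₂ hQX Q hQG (𝟙 Q)
          exact hQsimple.2.1 (by rw [IsZero.iff_id_eq_zero]; exact hid)
        · push_neg at hall
          obtain ⟨g, hgz⟩ := hall
          have hkerW := hwide.ker_mem g hS.1 hQsimple.1
          rcases hS.2.2 (kernel.ι g) hkerW inferInstance with h0 | hiso
          · haveI : Mono g := aux_mono_of_isZero_kernel g h0
            rcases hQsimple.2.2 g hS.1 inferInstance with h | h
            · exact absurd h hS.2.1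
            · haveI := h
              exact hX.quot_mem (inv g) inferInstance hQX
          · exfalso
            haveI := hiso
            refine hgz ?_
            have : kernel.ι g ≫ g = kernel.ι g ≫ 0 := by rw [kernel.condition, comp_zero]
            exact (cancel_epi (kernel.ι g)).mp this
      refine Set.Subset.antisymm hXV₂ (fun M' hM' => ?_)
      obtain ⟨t', ht'X, hperp'⟩ := aux_radical hX M'
      have hG' : cokernel t'.arrow ∈ G := by
        rintro B (hBU | rfl)
        · exact fun g => hperp' B (hUX hBU) g
        · exact fun g => hperp' B hSX g
      have hz : IsZero (cokernel t'.arrow) :=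
        aux_isZero_of_epi_eq_zero _ (hM' _ hG' (cokernel.π t'.arrow))
      exact hX.ext_mem _ (aux_shortExact_mono t'.arrow) ht'X (hX.zero_mem _ hz)
  · -- converse 2
    rintro ⟨V, hUV, hVT, hHA, hBL⟩
    obtain ⟨⟨hSnz, hbrick⟩, hSRU, hSV⟩ := hBL
    have hSW : S ∈ RPerp C U ∩ T := ⟨hSRU, hVT hSV⟩
    refine ⟨hSW, hSnz, ?_⟩
    intro A f hAW hf
    by_cases hQ0 : IsZero (cokernel f)
    · refine Or.inr ?_
      haveI : Epi f := aux_epi_of_isZero_cokernel f hQ0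
      exact isIso_of_mono_of_epi f
    have hQW : cokernel f ∈ RPerp C U ∩ T := hwide.coker_mem f hAW hSW
    set G' : Set C := RPerp C (U ∪ {cokernel f}) with hG'def
    set X : Set C := V ∩ LPerp C G' with hXdef
    have hXtc : IsTorsionClass C X := aux_inter_torsion hHA.1 (aux_lperp_torsion G')
    have hUX : U ⊆ X := fun B hB => ⟨hUV hB, fun Y hY g => hY B (Or.inl hB) g⟩
    have hQV : cokernel f ∈ V := hHA.1.quot_mem (cokernel.π f) inferInstance hSV
    have hQX : cokernel f ∈ X := ⟨hQV, fun Y hY g => hY (cokernel f) (Or.inr rfl) g⟩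
    have hQnU : cokernel f ∉ U := fun hQU => hQ0 (by
      rw [IsZero.iff_id_eq_zero]; exact hQW.1 (cokernel f) hQU (𝟙 (cokernel f)))
    rcases hHA.2.2.2 X hXtc hUX Set.inter_subset_left with hXU | hXV
    · exfalso
      refine hQnU ?_
      rw [← hXU]; exact hQX
    · have hSX : S ∈ X := by rw [hXV]; exact hSV
      by_cases hall : ∀ h : cokernel f ⟶ S, h = 0
      · exfalso
        have hSG' : S ∈ G' := by
          rintro B (hBU | rfl)
          · exact fun g => hSRU B hBU g
          · exact hall
        exact hSnz (by rw [IsZero.iff_id_eq_zero]; exact hSX.2 S hSG' (𝟙 S))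
      · push_neg at hall
        obtain ⟨h, hne⟩ := hall
        have hne2 : cokernel.π f ≫ h ≠ 0 := fun h0 => hne (by
          have : cokernel.π f ≫ h = cokernel.π f ≫ 0 := by rw [h0, comp_zero]
          exact (cancel_epi (cokernel.π f)).mp this)
        rcases hbrick (cokernel.π f ≫ h) with h0 | hiso
        · exact absurd h0 hne2
        · haveI := hiso
          haveI : Mono (cokernel.π f) := mono_of_mono (cokernel.π f) h
          exact Or.inl (aux_isZero_of_mono_eq_zero f
            (zero_of_comp_mono (cokernel.π f) (cokernel.condition f)))
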